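/- Let r > 0, let P : ℝ → ℝ be convex, and let (f_k)_{k≥1} be a sequence of functions, each twice differentiable on (β−r, β+r), such that: P(t) ≤ f_k(t) for all t ∈ (β−r, β+r) and all k; f_k(β) − P(β) → 0 as k → ∞; and there exists L < ∞ with |f_k''(t)| ≤ L for all k and all t ∈ (β−r, β+r). Then P is differentiable at β, the limit lim_{k→∞} f_k'(β) exists, and P'(β) = lim_{k→∞} f_k'(β). -/

import Mathlib

open Set Filter Topology

/-- Let `P` be convex and `(f_k)` a sequence of functions, each twice differentiable on
`(β-r, β+r)`, with `P ≤ f_k` on `(β-r, β+r)`, `f_k β - P β → 0`, and with second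
derivatives uniformly bounded by some `L` on `(β-r, β+r)`. Then `P` is differentiable
at `β` and `P'(β) = lim_k f_k'(β)`. -/
theorem convex_differentiable_of_smooth_majorants
    (P : ℝ → ℝ) (β r : ℝ) (hr : 0 < r) (hP : ConvexOn ℝ univ P)
    (f f' f'' : ℕ → ℝ → ℝ)
    (hd1 : ∀ k, ∀ t ∈ Ioo (β - r) (β + r), HasDerivAt (f k) (f' k t) t)
    (hd2 : ∀ k, ∀ t ∈ Ioo (β - r) (β + r), HasDerivAt (f' k) (f'' k t) t)
    (hPf : ∀ k, ∀ t ∈ Ioo (β - r) (β + r), P t ≤ f k t)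
    (hlim : Tendsto (fun k => f k β - P β) atTop (𝓝 0))
    (L : ℝ) (hL : ∀ k, ∀ t ∈ Ioo (β - r) (β + r), |f'' k t| ≤ L) :
    ∃ d : ℝ, HasDerivAt P d β ∧ Tendsto (fun k => f' k β) atTop (𝓝 d) := by
  have hβI : β ∈ Ioo (β - r) (β + r) := ⟨by linarith, by linarith⟩
  have hL0 : 0 ≤ L := le_trans (abs_nonneg _) (hL 0 β hβI)
  have hεnn : ∀ k, 0 ≤ f k β - P β := fun k => sub_nonneg.mpr (hPf k β hβI)
  -- f' k is L-Lipschitz w.r.t. β on the interval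
  have hlip : ∀ k, ∀ t ∈ Ioo (β - r) (β + r), ‖f' k t - f' k β‖ ≤ L * ‖t - β‖ := by
    intro k t ht
    exact Convex.norm_image_sub_le_of_norm_hasDerivWithin_le
      (fun x hx => (hd2 k x hx).hasDerivWithinAt)
      (fun x hx => by simpa [Real.norm_eq_abs] using hL k x hx)
      (convex_Ioo _ _) hβI ht
  -- quadratic Taylor-type bound
  have htaylor : ∀ k, ∀ t ∈ Ioo (β - r) (β + r),
      |f k t - f k β - f' k β * (t - β)| ≤ L * (t - β) ^ 2 := by
    intro k t ht
    have hsub : uIcc β t ⊆ Ioo (β - r) (β + r) :=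
      (ordConnected_Ioo).uIcc_subset hβI ht
    have hderiv : ∀ x ∈ uIcc β t,
        HasDerivWithinAt (fun y => f k y - f' k β * y) (f' k x - f' k β) (uIcc β t) x := by
      intro x hx
      have h1 : HasDerivAt (fun y : ℝ => f' k β * y) (f' k β) x := by
        simpa using (hasDerivAt_id x).const_mul (f' k β)
      exact ((hd1 k x (hsub hx)).sub h1).hasDerivWithinAt
    have hC : ∀ x ∈ uIcc β t, ‖f' k x - f' k β‖ ≤ L * |t - β| := by
      intro x hx
      calc ‖f' k x - f' k β‖ ≤ L * ‖x - β‖ := hlip k x (hsub hx)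
        _ ≤ L * |t - β| := by
            apply mul_le_mul_of_nonneg_left _ hL0
            simpa [Real.norm_eq_abs] using abs_sub_left_of_mem_uIcc hx
    have key := Convex.norm_image_sub_le_of_norm_hasDerivWithin_le
      hderiv hC (convex_uIcc β t) left_mem_uIcc right_mem_uIcc
    have heq : (f k t - f' k β * t) - (f k β - f' k β * β)
        = f k t - f k β - f' k β * (t - β) := by ring
    rw [Real.norm_eq_abs, Real.norm_eq_abs, heq] at key
    calc |f k t - f k β - f' k β * (t - β)| ≤ L * |t - β| * |t - β| := key
      _ = L * (t - β) ^ 2 := by rw [mul_assoc, abs_mul_abs_self, sq]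
  -- key two-sided estimate using convexity
  have key : ∀ k, ∀ t ∈ Ioo (β - r) (β + r),
      |P t - P β - f' k β * (t - β)| ≤ (f k β - P β) + L * (t - β) ^ 2 := by
    intro k t ht
    have ht' : 2 * β - t ∈ Ioo (β - r) (β + r) :=
      ⟨by linarith [ht.2], by linarith [ht.1]⟩
    have hmid : P β ≤ (P t + P (2 * β - t)) / 2 := by
      have h := hP.2 (mem_univ t) (mem_univ (2 * β - t))
        (by norm_num : (0:ℝ) ≤ 1/2) (by norm_num : (0:ℝ) ≤ 1/2) (by norm_num)
      have heq : (1/2 : ℝ) • t + (1/2 : ℝ) • (2 * β - t) = β := by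
        simp only [smul_eq_mul]; ring
      rw [heq] at h
      simp only [smul_eq_mul] at h
      linarith
    have h1 := htaylor k t ht
    have h2 := htaylor k (2 * β - t) ht'
    have hu := hPf k t ht
    have hu' := hPf k (2 * β - t) ht'
    have e1 : (2 * β - t) - β = -(t - β) := by ring
    have e2 : ((2 * β - t) - β) ^ 2 = (t - β) ^ 2 := by ring
    rw [abs_le] at h1 h2
    rw [e1] at h2
    simp only [neg_sq] at h2
    rw [abs_le]
    constructor
    · nlinarith [h2.2]
    · nlinarith [h1.2]
  -- the derivatives at β form a Cauchy sequence
  have hcauchy : CauchySeq (fun k => f' k β) := by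
    rw [Metric.cauchySeq_iff']
    intro ε hε
    set h : ℝ := min (r / 2) (ε / (4 * L + 1)) with hh
    have hh0 : 0 < h := lt_min (by linarith) (div_pos hε (by linarith))
    have hhr : h < r := lt_of_le_of_lt (min_le_left _ _) (by linarith)
    have hmem : β + h ∈ Ioo (β - r) (β + r) := ⟨by linarith, by linarith⟩
    have h2L : 2 * L * h ≤ ε / 2 := by
      have h1 : h ≤ ε / (4 * L + 1) := min_le_right _ _
      have h2 : 0 < 4 * L + 1 := by linarith
      rw [le_div_iff₀ h2] at h1
      nlinarith
    obtain ⟨N, hN⟩ := (Metric.tendsto_atTop.mp hlim) (h * ε / 8) (by positivity)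
    refine ⟨N, fun n hn => ?_⟩
    have hkn := key n (β + h) hmem
    have hkN := key N (β + h) hmem
    have hsmall : ∀ m, N ≤ m → f m β - P β < h * ε / 8 := by
      intro m hm
      have := hN m hm
      rw [Real.dist_eq, sub_zero] at this
      exact lt_of_le_of_lt (le_abs_self _) this
    have hsn := hsmall n hn
    have hsN := hsmall N le_rfl
    have he : β + h - β = h := by ring
    rw [he] at hkn hkN
    rw [Real.dist_eq]
    have hq : |f' n β * h - f' N β * h|
        ≤ (f n β - P β) + (f N β - P β) + 2 * (L * h ^ 2) := by
      have heq : f' n β * h - f' N β * h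
          = (P (β + h) - P β - f' N β * h) - (P (β + h) - P β - f' n β * h) := by ring
      rw [heq]
      calc |(P (β + h) - P β - f' N β * h) - (P (β + h) - P β - f' n β * h)|
          ≤ |P (β + h) - P β - f' N β * h| + |P (β + h) - P β - f' n β * h| :=
            abs_sub _ _
        _ ≤ (f n β - P β) + (f N β - P β) + 2 * (L * h ^ 2) := by linarith
    have habs : |f' n β - f' N β| * h = |f' n β * h - f' N β * h| := by
      rw [← sub_mul, abs_mul, abs_of_pos hh0]
    have hlt : |f' n β - f' N β| * h < ε * h := by
      rw [habs]
      calc |f' n β * h - f' N β * h|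
          ≤ (f n β - P β) + (f N β - P β) + 2 * (L * h ^ 2) := hq
        _ < h * ε / 8 + h * ε / 8 + 2 * (L * h ^ 2) := by linarith
        _ ≤ ε * h := by nlinarith
    exact lt_of_mul_lt_mul_right (by linarith [hlt]) hh0.le
  obtain ⟨d, hd⟩ := cauchySeq_tendsto_of_complete hcauchy
  refine ⟨d, ?_, hd⟩
  -- pass to the limit in `key`
  have final : ∀ t ∈ Ioo (β - r) (β + r),
      |P t - P β - d * (t - β)| ≤ L * (t - β) ^ 2 := by
    intro t ht
    have h1 : Tendsto (fun k => |P t - P β - f' k β * (t - β)|) atTop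
        (𝓝 |P t - P β - d * (t - β)|) :=
      ((tendsto_const_nhds.sub (hd.mul_const _)).abs)
    have h2 : Tendsto (fun k => (f k β - P β) + L * (t - β) ^ 2) atTop
        (𝓝 (0 + L * (t - β) ^ 2)) := hlim.add tendsto_const_nhds
    have := le_of_tendsto_of_tendsto' h1 h2 (fun k => key k t ht)
    simpa using this
  rw [hasDerivAt_iff_tendsto_slope]
  have hmemnhds : ∀ᶠ t in 𝓝[≠] β, t ∈ Ioo (β - r) (β + r) :=
    eventually_nhdsWithin_of_eventually_nhds
      (eventually_of_mem (isOpen_Ioo.mem_nhds hβI) (fun t ht => ht))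
  have hbound : ∀ᶠ t in 𝓝[≠] β, |slope P β t - d| ≤ L * |t - β| := by
    filter_upwards [hmemnhds, self_mem_nhdsWithin] with t ht htne
    have hne : t - β ≠ 0 := sub_ne_zero.mpr htne
    have hpos : 0 < |t - β| := abs_pos.mpr hne
    have hf := final t ht
    rw [slope_def_field]
    have heq : (P t - P β) / (t - β) - d = (P t - P β - d * (t - β)) / (t - β) := by
      field_simp
    rw [heq, abs_div, div_le_iff₀ hpos]
    calc |P t - P β - d * (t - β)| ≤ L * (t - β) ^ 2 := hf
      _ = L * |t - β| * |t - β| := by rw [mul_assoc, abs_mul_abs_self, sq]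
  have h0 : Tendsto (fun t : ℝ => L * |t - β|) (𝓝[≠] β) (𝓝 0) := by
    have hc : Tendsto (fun t : ℝ => L * |t - β|) (𝓝 β) (𝓝 (L * |β - β|)) :=
      (continuous_const.mul ((continuous_id.sub continuous_const).abs)).tendsto β
    simpa using hc.mono_left nhdsWithin_le_nhds
  have hsq : Tendsto (fun t => |slope P β t - d|) (𝓝[≠] β) (𝓝 0) :=
    squeeze_zero' (.of_forall fun t => abs_nonneg _) hbound h0
  rw [tendsto_iff_dist_tendsto_zero]
  simpa [Real.dist_eq] using hsq
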